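/- Let p be prime, ξ ∈ ℚ_p, n ≥ 1, and λ > 0. Suppose an integer tuple (p_0, p_1, …, p_n) with p_i ≠ 0 and |p_i|_p ≥ c > 0 for all i satisfies |p_{i−1}p_{i+1} − p_i²|_p ≤ ε for i = 1, …, n−1. Then the p-adic number ξ₀ := p_1/p_0 satisfies |p_0 ξ₀^i − p_i|_p ≤ c^{−n} ε · max(1, |ξ₀|_p)^n for i = 1, …, n. -/

import Mathlib

private lemma stmt18_aux {p : ℕ} [Fact p.Prime] (a b : ℚ_[p]) : ‖a - b‖ ≤ max ‖a‖ ‖b‖ := by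
  rw [sub_eq_add_neg]
  simpa using Padic.nonarchimedean a (-b)


/-- Converse characterization: if the Hankel minors `p_{i−1} p_{i+1} − p_i²` are `p`-adically
small and the `|p_i|_p` are bounded below by `c`, then the tuple approximates the Veronese
point attached to `ξ₀ = p_1/p_0`. -/
theorem stmt18 (p : ℕ) [Fact p.Prime] (ξ : ℚ_[p]) (n : ℕ) (hn : 1 ≤ n)
    (lam : ℝ) (hlam : 0 < lam) (P : ℕ → ℤ) (c ε : ℝ) (hc : 0 < c) (hε : 0 < ε)
    (hPne : ∀ i ≤ n, P i ≠ 0) (hPlow : ∀ i ≤ n, c ≤ ‖((P i : ℤ) : ℚ_[p])‖)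
    (h : ∀ i, 1 ≤ i → i ≤ n - 1 →
      ‖((P (i - 1) * P (i + 1) - (P i) ^ 2 : ℤ) : ℚ_[p])‖ ≤ ε) :
    ∀ i, 1 ≤ i → i ≤ n →
      ‖(P 0 : ℚ_[p]) * ((P 1 : ℚ_[p]) / (P 0 : ℚ_[p])) ^ i - (P i : ℚ_[p])‖ ≤
        c ^ (-(n : ℤ)) * ε * max 1 ‖(P 1 : ℚ_[p]) / (P 0 : ℚ_[p])‖ ^ n := by
  intro i hi1 hin
  have hc1 : c ≤ 1 := le_trans (hPlow 0 (by omega)) (Padic.norm_int_le_one _)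
  set ξ₀ : ℚ_[p] := (P 1 : ℚ_[p]) / (P 0 : ℚ_[p]) with hξ₀
  set M : ℝ := max 1 ‖ξ₀‖ with hM
  have hM1 : (1:ℝ) ≤ M := le_max_left _ _
  have hξM : ‖ξ₀‖ ≤ M := le_max_right _ _
  have hP0 : ((P 0 : ℤ) : ℚ_[p]) ≠ 0 := by
    exact_mod_cast Int.cast_ne_zero.mpr (hPne 0 (by omega))
  -- bound on D_j = P_j P_1 - P_0 P_{j+1}
  have hD : ∀ j, 1 ≤ j → j ≤ n - 1 →
      ‖((P j * P 1 - P 0 * P (j+1) : ℤ) : ℚ_[p])‖ ≤ ε / c ^ (j - 1) := by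
    intro j hj
    induction j, hj using Nat.le_induction with
    | base =>
      intro h1n
      have hkey : ((P 1 * P 1 - P 0 * P 2 : ℤ) : ℚ_[p]) =
          -((P 0 * P 2 - (P 1)^2 : ℤ) : ℚ_[p]) := by push_cast; ring
      rw [hkey, norm_neg]
      simpa using h 1 le_rfl h1n
    | succ j hj ih =>
      intro hjn
      have ihj := ih (by omega)
      have hΔ := h (j+1) (by omega) hjn
      have hkey : ((P j : ℤ) : ℚ_[p]) * ((P (j+1) * P 1 - P 0 * P (j+2) : ℤ) : ℚ_[p]) =
          ((P (j+1) : ℤ) : ℚ_[p]) * ((P j * P 1 - P 0 * P (j+1) : ℤ) : ℚ_[p]) -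
          ((P 0 : ℤ) : ℚ_[p]) * ((P j * P (j+2) - (P (j+1))^2 : ℤ) : ℚ_[p]) := by
        push_cast; ring
      have hcpos : (0:ℝ) < c ^ (j-1) := pow_pos hc _
      have h1 : ‖((P (j+1) : ℤ) : ℚ_[p]) * ((P j * P 1 - P 0 * P (j+1) : ℤ) : ℚ_[p])‖
          ≤ ε / c ^ (j-1) := by
        rw [norm_mul]
        calc ‖((P (j+1) : ℤ) : ℚ_[p])‖ * ‖((P j * P 1 - P 0 * P (j+1) : ℤ) : ℚ_[p])‖
            ≤ 1 * (ε / c ^ (j-1)) := by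
              apply mul_le_mul (Padic.norm_int_le_one _) ihj (norm_nonneg _) zero_le_one
          _ = ε / c ^ (j-1) := one_mul _
      have h2 : ‖((P 0 : ℤ) : ℚ_[p]) * ((P j * P (j+2) - (P (j+1))^2 : ℤ) : ℚ_[p])‖
          ≤ ε / c ^ (j-1) := by
        rw [norm_mul]
        calc ‖((P 0 : ℤ) : ℚ_[p])‖ * ‖((P j * P (j+2) - (P (j+1))^2 : ℤ) : ℚ_[p])‖
            ≤ 1 * ε := by
              apply mul_le_mul (Padic.norm_int_le_one _) ?_ (norm_nonneg _) zero_le_one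
              simpa using hΔ
          _ = ε := one_mul _
          _ ≤ ε / c ^ (j-1) := by
              rw [le_div_iff₀ hcpos]
              nlinarith [pow_le_one₀ hc.le hc1 (n := j-1)]
      have hmain : ‖((P j : ℤ) : ℚ_[p])‖ * ‖((P (j+1) * P 1 - P 0 * P (j+2) : ℤ) : ℚ_[p])‖
          ≤ ε / c ^ (j-1) := by
        rw [← norm_mul, hkey]
        exact (stmt18_aux _ _).trans (max_le h1 h2)
      have hPj : c ≤ ‖((P j : ℤ) : ℚ_[p])‖ := hPlow j (by omega)
      have hstep : c * ‖((P (j+1) * P 1 - P 0 * P (j+2) : ℤ) : ℚ_[p])‖ ≤ ε / c ^ (j-1) := by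
        calc c * ‖((P (j+1) * P 1 - P 0 * P (j+2) : ℤ) : ℚ_[p])‖
            ≤ ‖((P j : ℤ) : ℚ_[p])‖ * ‖((P (j+1) * P 1 - P 0 * P (j+2) : ℤ) : ℚ_[p])‖ :=
              mul_le_mul_of_nonneg_right hPj (norm_nonneg _)
          _ ≤ ε / c ^ (j-1) := hmain
      have hrweq : ε / c ^ (j+1-1) = (ε / c ^ (j-1)) / c := by
        rw [Nat.add_sub_cancel, show j = j - 1 + 1 from by omega, pow_succ, ← div_div]
        simp [Nat.add_sub_cancel]
      rw [hrweq, le_div_iff₀ hc, mul_comm]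
      exact hstep
  -- main induction on E_j = P_0 ξ₀^j - P_j
  have hE : ∀ j, 1 ≤ j → j ≤ n →
      ‖(P 0 : ℚ_[p]) * ξ₀ ^ j - (P j : ℚ_[p])‖ ≤ ε / c ^ (j-1) * M ^ (j-1) := by
    intro j hj
    induction j, hj using Nat.le_induction with
    | base =>
      intro _
      have h0 : (P 0 : ℚ_[p]) * ξ₀ ^ 1 - (P 1 : ℚ_[p]) = 0 := by
        rw [hξ₀, pow_one, mul_div_cancel₀ _ hP0, sub_self]
      rw [h0, norm_zero]
      positivity
    | succ j hj ih =>
      intro hjn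
      have ihj := ih (by omega)
      have hDj := hD j hj (by omega)
      have hkey : (P 0 : ℚ_[p]) * ξ₀ ^ (j+1) - (P (j+1) : ℚ_[p]) =
          ((P 0 : ℚ_[p]) * ξ₀ ^ j - (P j : ℚ_[p])) * ξ₀ +
          ((P j * P 1 - P 0 * P (j+1) : ℤ) : ℚ_[p]) / ((P 0 : ℤ) : ℚ_[p]) := by
        rw [hξ₀]
        push_cast
        field_simp
        ring_nf
        field_simp
        ring
      rw [hkey]
      have hcj : (0:ℝ) < c ^ (j-1) := pow_pos hc _
      have hcjj : (0:ℝ) < c ^ j := pow_pos hc _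
      have hMj : (0:ℝ) < M ^ j := by positivity
      calc ‖_ + _‖ ≤ max ‖((P 0 : ℚ_[p]) * ξ₀ ^ j - (P j : ℚ_[p])) * ξ₀‖
            ‖((P j * P 1 - P 0 * P (j+1) : ℤ) : ℚ_[p]) / ((P 0 : ℤ) : ℚ_[p])‖ :=
            Padic.nonarchimedean _ _
        _ ≤ ε / c ^ (j+1-1) * M ^ (j+1-1) := by
            simp only [Nat.add_sub_cancel]
            apply max_le
            · rw [norm_mul]
              calc ‖(P 0 : ℚ_[p]) * ξ₀ ^ j - (P j : ℚ_[p])‖ * ‖ξ₀‖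
                  ≤ (ε / c ^ (j-1) * M ^ (j-1)) * M := by
                    apply mul_le_mul ihj hξM (norm_nonneg _)
                    positivity
                _ = ε / c ^ (j-1) * M ^ (j-1+1) := by rw [pow_succ]; ring
                _ = ε / c ^ (j-1) * M ^ j := by rw [show j - 1 + 1 = j by omega]
                _ ≤ ε / c ^ j * M ^ j := by
                    apply mul_le_mul_of_nonneg_right _ hMj.le
                    exact div_le_div_of_nonneg_left hε.le hcjj
                      (pow_le_pow_of_le_one hc.le hc1 (Nat.sub_le j 1))
            · rw [norm_div]
              have hP0low : c ≤ ‖((P 0 : ℤ) : ℚ_[p])‖ := hPlow 0 (by omega)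
              have hP0pos : (0:ℝ) < ‖((P 0 : ℤ) : ℚ_[p])‖ := lt_of_lt_of_le hc hP0low
              calc ‖((P j * P 1 - P 0 * P (j+1) : ℤ) : ℚ_[p])‖ / ‖((P 0 : ℤ) : ℚ_[p])‖
                  ≤ (ε / c ^ (j-1)) / c := by
                    apply div_le_div₀ (by positivity) hDj hc hP0low
                _ = ε / c ^ j := by
                    rw [div_div, ← pow_succ, show j - 1 + 1 = j by omega]
                _ ≤ ε / c ^ j * M ^ j :=
                    le_mul_of_one_le_right (by positivity) (one_le_pow₀ hM1)
  have hfin := hE i hi1 hin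
  have hrw : c ^ (-(n : ℤ)) * ε * M ^ n = ε / c ^ n * M ^ n := by
    rw [zpow_neg, zpow_natCast]
    ring
  rw [hrw]
  calc ‖(P 0 : ℚ_[p]) * ξ₀ ^ i - (P i : ℚ_[p])‖ ≤ ε / c ^ (i-1) * M ^ (i-1) := hfin
    _ ≤ ε / c ^ n * M ^ n := by
        have h1' : ε / c ^ (i-1) ≤ ε / c ^ n :=
          div_le_div_of_nonneg_left hε.le (pow_pos hc _)
            (pow_le_pow_of_le_one hc.le hc1 (by omega))
        have h2' : M ^ (i-1) ≤ M ^ n := pow_le_pow_right₀ hM1 (by omega)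
        exact mul_le_mul h1' h2' (by positivity) (by positivity)
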